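/- arXiv:2403.05590 — 2 statements merged into one kernel-verified Lean document; each statement's English description precedes it below -/
import Mathlib

section
/- Let (H, π, Φ) be the GNS triple of (A, φ) where φ is G-strongly quasi-invariant with continuous g ↦ x_g. Define U_g π(a)Φ = π(g(a) x_{g⁻¹}^{1/2})Φ. Then for all a ∈ A and g ∈ G, U_g π(a) U_g* = π(g(a)), i.e., conjugation by U_g implements the automorphism g on π(A). -/
open scoped ComplexOrder

/-- In the GNS representation `(H, π, Φ)` of `(A, φ)`, with `φ`
`G`-strongly quasi-invariant (Radon–Nikodym elements `x_g` with positive square roots `s_g`),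
the unitaries `U_g` defined by `U_g π(a)Φ = π(g(a) x_{g⁻¹}^{1/2})Φ` implement the group:
`U_g π(a) U_g* = π(g(a))`. -/
theorem unitaries_implement_automorphisms
    {A G H : Type*} [NormedRing A] [StarRing A] [CStarRing A] [NormedAlgebra ℂ A]
    [StarModule ℂ A] [CompleteSpace A] [Group G]
    [NormedAddCommGroup H] [InnerProductSpace ℂ H] [CompleteSpace H]
    (α : G → A ≃⋆ₐ[ℂ] A) (hα : ∀ (g h : G) (a : A), α (g * h) a = α g (α h a))
    (φ : A →ₗ[ℂ] ℂ)
    (hφ_pos : ∀ a : A, 0 ≤ φ (star a * a))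
    (hφ_one : φ 1 = 1)
    (hφ_faithful : ∀ a : A, φ (star a * a) = 0 → a = 0)
    (x : G → A) (hx_sa : ∀ g : G, IsSelfAdjoint (x g))
    (hqi : ∀ (g : G) (a : A), φ (α g a) = φ (x g * a))
    (hcent : ∀ (g : G) (a : A), φ (x g * a) = φ (a * x g))
    (hcocycle : ∀ g h : G, x (g * h) = x h * α h⁻¹ (x g))
    (s : G → A) (hs_sq : ∀ g : G, s g * s g = x g) (hs_sa : ∀ g : G, IsSelfAdjoint (s g))
    -- GNS triple
    (π : A →⋆ₐ[ℂ] (H →L[ℂ] H)) (Φ : H)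
    (hGNS : ∀ a b : A, (inner ℂ (π a Φ) (π b Φ) : ℂ) = φ (star a * b))
    (hcyclic : Dense (Set.range fun a : A => π a Φ))
    (U : G → H →L[ℂ] H)
    (hU_unitary : ∀ g : G,
      (ContinuousLinearMap.adjoint (U g)).comp (U g) = 1 ∧
      (U g).comp (ContinuousLinearMap.adjoint (U g)) = 1)
    (hU_def : ∀ (g : G) (a : A), U g (π a Φ) = π (α g a * s g⁻¹) Φ) :
    ∀ (g : G) (a : A),
      ((U g).comp (π a)).comp (ContinuousLinearMap.adjoint (U g)) = π (α g a) := by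
  intro g a
  have key : (U g).comp (π a) = (π (α g a)).comp (U g) := by
    apply DFunLike.coe_injective
    refine Continuous.ext_on hcyclic (U g ∘L π a).continuous
      ((π (α g a)) ∘L U g).continuous ?_
    rintro _ ⟨b, rfl⟩
    simp only [ContinuousLinearMap.comp_apply]
    have h1 : π a (π b Φ) = π (a * b) Φ := by
      rw [map_mul, ContinuousLinearMap.mul_apply]
    rw [h1, hU_def, hU_def]
    simp [map_mul, mul_assoc, ContinuousLinearMap.mul_apply]
  calc ((U g).comp (π a)).comp (ContinuousLinearMap.adjoint (U g))
      = (π (α g a)).comp ((U g).comp (ContinuousLinearMap.adjoint (U g))) := by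
        rw [key, ContinuousLinearMap.comp_assoc]
    _ = π (α g a) := by rw [(hU_unitary g).2]; ext v; rfl
end

section
/- Let W, W₀,…,W_{d} be commuting density matrices on ℂ^d with (1/C) ≤ ‖W_n‖ ≤ C. For a permutation σ with support Λ_σ and W_n = W for n ∉ F (F finite), the Radon–Nikodym element x_σ = ∏_{n∈Λ_σ} j_n(W_{σ(n)} W_n^{-1}) satisfies: if σ(k), σ⁻¹(k) ∉ F ∪ {indices ≤ m₀} appropriately (σ ∈ S_N^{(m₀)} with F ⊆ {0,…,m₀}), then x_σ = ∏_{n∈F} j_n(W W_n^{-1}) j_{σ⁻¹(n)}(W_n W^{-1}). -/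
open scoped ComplexOrder
attribute [local instance] Matrix.normedAddCommGroup

private lemma myNoncommProd_eq_one {α M : Type*} [Monoid M] (s : Finset α) (f : α → M)
    (comm) (h : ∀ x ∈ s, f x = 1) : s.noncommProd f comm = 1 :=
  Finset.noncommProd_induction s f comm (· = 1)
    (fun a b ha hb => by rw [ha, hb, one_mul]) rfl h

private lemma myNoncommProd_map {α β M : Type*} [Monoid M] (s : Finset α) (e : α ↪ β)
    (f : β → M) (comm) :
    (s.map e).noncommProd f comm
      = s.noncommProd (fun a => f (e a))
          (fun x hx y hy h =>
            comm (Finset.mem_coe.2 (Finset.mem_map_of_mem e (Finset.mem_coe.1 hx)))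
              (Finset.mem_coe.2 (Finset.mem_map_of_mem e (Finset.mem_coe.1 hy)))
              (fun he => h (e.injective he))) := by
  classical
  induction s using Finset.cons_induction with
  | empty => simp; exact (Finset.noncommProd_empty _ _).symm
  | cons a s ha ih =>
    refine (Finset.noncommProd_congr (Finset.map_cons e a s ha) (fun _ _ => rfl) comm).trans ?_
    refine (Finset.noncommProd_cons _ _ _ _ _).trans ?_
    refine Eq.trans ?_ (Finset.noncommProd_cons _ _ _ _ _).symm
    congr 1
    exact ih _

/-- For commuting density matrices `W_n` (equal to `W₀` off the finite set
`F ⊆ {0,…,m₀}`) with norms in `[1/C, C]`, and a permutation `σ ∈ S_N^{(m₀)}` with support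
`Λ`, the Radon–Nikodym element `x_σ = ∏_{n∈Λ} j_n(W_{σ(n)} W_n⁻¹)` equals
`∏_{n∈F} j_n(W₀ W_n⁻¹) j_{σ⁻¹(n)}(W_n W₀⁻¹)`. -/
theorem RN_element_of_outer_permutation
    {A : Type*} [Ring A] {d : ℕ}
    (j : ℕ → Matrix (Fin d) (Fin d) ℂ →+* A)
    (hj_comm : ∀ m n : ℕ, m ≠ n →
      ∀ a b : Matrix (Fin d) (Fin d) ℂ, Commute (j m a) (j n b))
    (W₀ : Matrix (Fin d) (Fin d) ℂ) (W : ℕ → Matrix (Fin d) (Fin d) ℂ)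
    (hW_pos : ∀ n, (W n).PosDef) (hW₀_pos : W₀.PosDef)
    (hW_tr : ∀ n, (W n).trace = 1) (hW₀_tr : W₀.trace = 1)
    (hW_comm : ∀ m n, Commute (W m) (W n)) (hW₀_comm : ∀ n, Commute W₀ (W n))
    (C : ℝ) (hC : 1 < C) (hW_norm : ∀ n, 1 / C ≤ ‖W n‖ ∧ ‖W n‖ ≤ C)
    (F : Finset ℕ) (m₀ : ℕ) (hF : ∀ n ∈ F, n ≤ m₀)
    (hW_off : ∀ n ∉ F, W n = W₀)
    (σ : Equiv.Perm ℕ) (Λ : Finset ℕ) (hΛ : ∀ n : ℕ, σ n ≠ n ↔ n ∈ Λ)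
    (hσ : ∀ k ≤ m₀, m₀ < σ k ∧ m₀ < σ.symm k)
    (hc1 : (Λ : Set ℕ).Pairwise fun m n =>
      Commute (j m (W (σ m) * (W m)⁻¹)) (j n (W (σ n) * (W n)⁻¹)))
    (hc2 : (F : Set ℕ).Pairwise fun m n =>
      Commute (j m (W₀ * (W m)⁻¹) * j (σ.symm m) (W m * W₀⁻¹))
              (j n (W₀ * (W n)⁻¹) * j (σ.symm n) (W n * W₀⁻¹))) :
    Λ.noncommProd (fun n => j n (W (σ n) * (W n)⁻¹)) hc1
      = F.noncommProd (fun n => j n (W₀ * (W n)⁻¹) * j (σ.symm n) (W n * W₀⁻¹)) hc2 := by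
  classical
  set f : ℕ → A := fun n => j n (W (σ n) * (W n)⁻¹) with hf
  -- basic index facts
  have hσF : ∀ n ∈ F, σ n ∉ F := fun n hn hc =>
    absurd (hF _ hc) (not_le.2 (hσ n (hF n hn)).1)
  have hsymmF : ∀ n ∈ F, m₀ < σ.symm n := fun n hn => (hσ n (hF n hn)).2
  set eσ : ℕ ↪ ℕ := ⟨σ.symm, σ.symm.injective⟩ with heσ
  set G : Finset ℕ := F ∪ F.map eσ with hG
  have hmap_mem : ∀ m ∈ F.map eσ, m₀ < m ∧ σ m ∈ F := by
    intro m hm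
    obtain ⟨n, hn, rfl⟩ := Finset.mem_map.1 hm
    refine ⟨hsymmF n hn, ?_⟩
    show σ (σ.symm n) ∈ F
    simpa using hn
  have hdisj : Disjoint F (F.map eσ) := by
    rw [Finset.disjoint_left]
    intro n hn hn'
    exact absurd (hF n hn) (not_le.2 (hmap_mem n hn').1)
  have hGΛ : G ⊆ Λ := by
    intro n hn
    rcases Finset.mem_union.1 hn with h | h
    · exact (hΛ n).1 (fun he => absurd (hF n h) (not_le.2 (he ▸ (hσ n (hF n h)).1)))
    · refine (hΛ n).1 (fun he => ?_)
      have h1 := (hmap_mem n h).1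
      have h2 := (hmap_mem n h).2
      rw [he] at h2
      have := hF n h2
      omega
  -- invertibility
  have hinv₀ : W₀ * W₀⁻¹ = 1 := Matrix.mul_nonsing_inv _ hW₀_pos.det_pos.ne'.isUnit
  have commAll : ∀ (s : Finset ℕ), (s : Set ℕ).Pairwise (Function.onFun Commute f) :=
    fun s x _ y _ h => hj_comm x y h _ _
  -- Step A: reduce Λ to G
  have hΛG : G ∪ (Λ \ G) = Λ := Finset.union_sdiff_of_subset hGΛ
  have stepA : Λ.noncommProd f hc1
      = G.noncommProd f (commAll G) * (Λ \ G).noncommProd f (commAll _) :=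
    (Finset.noncommProd_congr hΛG.symm (fun _ _ => rfl) hc1).trans
      (Finset.noncommProd_union_of_disjoint Finset.disjoint_sdiff f
        (fun x _ y _ h => hj_comm x y h _ _))
  have hones : (Λ \ G).noncommProd f (commAll _) = 1 := by
    apply myNoncommProd_eq_one
    intro n hn
    rw [Finset.mem_sdiff, hG, Finset.mem_union, not_or] at hn
    have hnF : n ∉ F := hn.2.1
    have hσnF : σ n ∉ F := by
      intro hc
      refine hn.2.2 (Finset.mem_map.2 ⟨σ n, hc, ?_⟩)
      show σ.symm (σ n) = n
      simp
    show j n (W (σ n) * (W n)⁻¹) = 1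
    rw [hW_off _ hnF, hW_off _ hσnF, hinv₀, map_one]
  -- Step B: split G
  have stepB : G.noncommProd f (commAll G)
      = F.noncommProd f (commAll F) * (F.map eσ).noncommProd f (commAll _) :=
    Finset.noncommProd_union_of_disjoint hdisj f (fun x _ y _ h => hj_comm x y h _ _)
  -- Step C
  have stepC : F.noncommProd f (commAll F)
      = F.noncommProd (fun n => j n (W₀ * (W n)⁻¹)) (fun x _ y _ h => hj_comm x y h _ _) := by
    refine (Finset.noncommProd_congr rfl (fun n hn => ?_) _).trans rfl
    show j n (W (σ n) * (W n)⁻¹) = j n (W₀ * (W n)⁻¹)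
    rw [hW_off _ (hσF n hn)]
  -- Step D
  have stepD : (F.map eσ).noncommProd f (commAll _)
      = F.noncommProd (fun n => j (σ.symm n) (W n * W₀⁻¹))
          (fun x hx y hy h => hj_comm _ _ (fun he => h (σ.symm.injective he)) _ _) := by
    rw [myNoncommProd_map]
    refine (Finset.noncommProd_congr rfl (fun n hn => ?_) _).trans rfl
    show j (σ.symm n) (W (σ (σ.symm n)) * (W (σ.symm n))⁻¹) = j (σ.symm n) (W n * W₀⁻¹)
    have h1 : σ.symm n ∉ F := fun hc => absurd (hF _ hc) (not_le.2 (hsymmF n hn))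
    rw [Equiv.apply_symm_apply, hW_off _ h1]
  -- Step E: distribute on RHS
  have stepE : F.noncommProd (fun n => j n (W₀ * (W n)⁻¹) * j (σ.symm n) (W n * W₀⁻¹)) hc2
      = F.noncommProd (fun n => j n (W₀ * (W n)⁻¹)) (fun x _ y _ h => hj_comm x y h _ _)
        * F.noncommProd (fun n => j (σ.symm n) (W n * W₀⁻¹))
          (fun x hx y hy h => hj_comm _ _ (fun he => h (σ.symm.injective he)) _ _) := by
    have hgf : (F : Set ℕ).Pairwise fun x y =>
        Commute (j (σ.symm x) (W x * W₀⁻¹)) (j y (W₀ * (W y)⁻¹)) := by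
      intro x hx y hy _
      refine hj_comm _ _ (fun he => ?_) _ _
      have := hsymmF x hx
      have := hF y hy
      omega
    refine Eq.trans ?_ (Finset.noncommProd_mul_distrib _ _ _ _ hgf)
    rfl
  rw [stepA, hones, mul_one, stepB, stepC, stepD, stepE]
end
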